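/- For a ∈ (-1/2, 1/2), the curve γ_a is parametrized by arc length: x_a'(s)² + y_a'(s)² + z_a'(s)² = 1 for all s ∈ ℝ. -/

import Mathlib

open Real MeasureTheory intervalIntegral

noncomputable def psi (a t : ℝ) : ℝ :=
  Real.sqrt (1/4 - a^2) /
    (Real.sqrt (1/2 + a * Real.cos (2*t)) * (1/2 - a * Real.cos (2*t)))

noncomputable def phi (a phi0 s : ℝ) : ℝ := phi0 + ∫ t in (0:ℝ)..s, psi a t

noncomputable def Ca (a : ℝ) : ℝ := ∫ t in (0:ℝ)..Real.pi, psi a t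

noncomputable def xa (a phi0 s : ℝ) : ℝ :=
  Real.sqrt (1/2 - a * Real.cos (2*s)) * Real.cos (phi a phi0 s)

noncomputable def ya (a phi0 s : ℝ) : ℝ :=
  Real.sqrt (1/2 - a * Real.cos (2*s)) * Real.sin (phi a phi0 s)

noncomputable def za (a s : ℝ) : ℝ := Real.sqrt (1/2 + a * Real.cos (2*s))

noncomputable def fa (a phi0 s : ℝ) : ℝ :=
  a * Real.sin (2*s) * Real.sin (phi a phi0 s) +
    Real.sqrt (1/4 - a^2) * Real.sqrt (1/2 + a * Real.cos (2*s)) * Real.cos (phi a phi0 s)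

lemma abs_cos_bound (a : ℝ) (ha : a ∈ Set.Ioo (-(1/2) : ℝ) (1/2)) (t : ℝ) :
    |a * Real.cos (2*t)| < 1/2 := by
  have h1 : |a| < 1/2 := abs_lt.2 ⟨by linarith [ha.1], ha.2⟩
  calc |a * Real.cos (2*t)| = |a| * |Real.cos (2*t)| := abs_mul _ _
    _ ≤ |a| * 1 := by
        have := Real.abs_cos_le_one (2*t)
        nlinarith [abs_nonneg a]
    _ < 1/2 := by linarith

lemma wpos (a : ℝ) (ha : a ∈ Set.Ioo (-(1/2) : ℝ) (1/2)) (t : ℝ) :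
    0 < 1/2 + a * Real.cos (2*t) := by
  have := abs_cos_bound a ha t
  have := abs_lt.1 this
  linarith [this.1]

lemma rpos (a : ℝ) (ha : a ∈ Set.Ioo (-(1/2) : ℝ) (1/2)) (t : ℝ) :
    0 < 1/2 - a * Real.cos (2*t) := by
  have := abs_lt.1 (abs_cos_bound a ha t)
  linarith [this.2]

lemma psi_continuous (a : ℝ) (ha : a ∈ Set.Ioo (-(1/2) : ℝ) (1/2)) :
    Continuous (psi a) := by
  apply Continuous.div continuous_const
  · exact ((Real.continuous_sqrt.comp (by continuity)).mul (by continuity))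
  · intro t
    have h1 := wpos a ha t
    have h2 := rpos a ha t
    positivity

lemma phi_hasDerivAt (a : ℝ) (ha : a ∈ Set.Ioo (-(1/2) : ℝ) (1/2)) (phi0 s : ℝ) :
    HasDerivAt (phi a phi0) (psi a s) s := by
  have hc := psi_continuous a ha
  have : HasDerivAt (fun u => ∫ t in (0:ℝ)..u, psi a t) (psi a s) s :=
    intervalIntegral.integral_hasDerivAt_right (hc.intervalIntegrable 0 s)
      (hc.aestronglyMeasurable.stronglyMeasurableAtFilter) hc.continuousAt
  exact this.const_add phi0

lemma w_hasDerivAt (a s : ℝ) :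
    HasDerivAt (fun t => 1/2 + a * Real.cos (2*t)) (-(2 * a * Real.sin (2*s))) s := by
  have h : HasDerivAt (fun t : ℝ => 2*t) 2 s := by
    simpa using (hasDerivAt_id s).const_mul 2
  have := ((Real.hasDerivAt_cos (2*s)).comp s h).const_mul a
  have := this.const_add (1/2 : ℝ)
  rw [show -(2 * a * Real.sin (2*s)) = a * (-Real.sin (2 * s) * 2) by ring]
  exact this

lemma r_hasDerivAt (a s : ℝ) :
    HasDerivAt (fun t => 1/2 - a * Real.cos (2*t)) (2 * a * Real.sin (2*s)) s := by
  have h : HasDerivAt (fun t : ℝ => 2*t) 2 s := by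
    simpa using (hasDerivAt_id s).const_mul 2
  have H := (((Real.hasDerivAt_cos (2*s)).comp s h).const_mul a).neg.const_add (1/2 : ℝ)
  have hval : -(a * (-Real.sin (2*s) * 2)) = 2*a*Real.sin (2*s) := by ring
  rw [← hval]
  simpa [Function.comp, sub_eq_add_neg] using H

lemma key (R W B d cp sp p : ℝ) (hR : R ≠ 0) (hW : W ≠ 0)
    (hp : p = B/(W*R^2))
    (hcs : sp^2 + cp^2 = 1) (hsum : R^2 + W^2 = 1) (hB : B^2 + d^2/4 = R^2*W^2) :
    (d/(2*R)*cp + R*(-sp*p))^2 + (d/(2*R)*sp + R*(cp*p))^2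
      + (-d/(2*W))^2 = 1 := by
  subst hp
  field_simp
  linear_combination (d^2*W^2 + 4*B^2) * hcs + d^2 * hsum
    + 4 * hB

theorem stmt14 (a : ℝ) (ha : a ∈ Set.Ioo (-(1/2) : ℝ) (1/2)) (phi0 : ℝ) (s : ℝ) :
    (deriv (xa a phi0) s)^2 + (deriv (ya a phi0) s)^2 + (deriv (za a) s)^2 = 1 := by
  have hw := wpos a ha s
  have hr := rpos a ha s
  set r : ℝ := 1/2 - a * Real.cos (2*s) with hrdef
  set w : ℝ := 1/2 + a * Real.cos (2*s) with hwdef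
  have hsqw : HasDerivAt (fun t => Real.sqrt (1/2 + a * Real.cos (2*t)))
      (-(2 * a * Real.sin (2*s)) / (2 * Real.sqrt w)) s := by
    have := (Real.hasDerivAt_sqrt (ne_of_gt hw)).comp s (w_hasDerivAt a s)
    simpa [mul_comm, div_eq_mul_inv, Function.comp_def] using this
  have hsqr : HasDerivAt (fun t => Real.sqrt (1/2 - a * Real.cos (2*t)))
      ((2 * a * Real.sin (2*s)) / (2 * Real.sqrt r)) s := by
    have := (Real.hasDerivAt_sqrt (ne_of_gt hr)).comp s (r_hasDerivAt a s)
    simpa [mul_comm, div_eq_mul_inv, Function.comp_def] using this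
  have hphi := phi_hasDerivAt a ha phi0 s
  have hcos : HasDerivAt (fun t => Real.cos (phi a phi0 t))
      (-Real.sin (phi a phi0 s) * psi a s) s :=
    (Real.hasDerivAt_cos (phi a phi0 s)).comp s hphi
  have hsin : HasDerivAt (fun t => Real.sin (phi a phi0 t))
      (Real.cos (phi a phi0 s) * psi a s) s :=
    (Real.hasDerivAt_sin (phi a phi0 s)).comp s hphi
  have hx : HasDerivAt (xa a phi0)
      ((2 * a * Real.sin (2*s)) / (2 * Real.sqrt r) * Real.cos (phi a phi0 s) +
        Real.sqrt r * (-Real.sin (phi a phi0 s) * psi a s)) s := hsqr.mul hcos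
  have hy : HasDerivAt (ya a phi0)
      ((2 * a * Real.sin (2*s)) / (2 * Real.sqrt r) * Real.sin (phi a phi0 s) +
        Real.sqrt r * (Real.cos (phi a phi0 s) * psi a s)) s := hsqr.mul hsin
  have hz : HasDerivAt (za a) (-(2 * a * Real.sin (2*s)) / (2 * Real.sqrt w)) s := hsqw
  rw [hx.deriv, hy.deriv, hz.deriv]
  have hb : (0:ℝ) ≤ 1/4 - a^2 := by nlinarith [ha.1, ha.2]
  have hB2 : Real.sqrt (1/4 - a^2) ^ 2 = 1/4 - a^2 := Real.sq_sqrt hb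
  have hR2 : Real.sqrt r ^ 2 = r := Real.sq_sqrt hr.le
  have hW2 : Real.sqrt w ^ 2 = w := Real.sq_sqrt hw.le
  have hRpos : 0 < Real.sqrt r := Real.sqrt_pos.2 hr
  have hWpos : 0 < Real.sqrt w := Real.sqrt_pos.2 hw
  have hs2 : Real.sin (2*s)^2 + Real.cos (2*s)^2 = 1 := Real.sin_sq_add_cos_sq _
  exact key (Real.sqrt r) (Real.sqrt w) (Real.sqrt (1/4 - a^2)) (2 * a * Real.sin (2*s))
    (Real.cos (phi a phi0 s)) (Real.sin (phi a phi0 s)) (psi a s)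
    hRpos.ne' hWpos.ne'
    (by rw [hR2]; rfl)
    (Real.sin_sq_add_cos_sq _)
    (by rw [hR2, hW2, hrdef, hwdef]; ring)
    (by rw [hB2, hR2, hW2, hrdef, hwdef]; nlinarith [hs2])
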